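/- arXiv:0909.2388 — 4 statements merged into one kernel-verified Lean document; each statement's English description precedes it below -/
import Mathlib

section
/- For any nonempty finite set A of integers and any positive integer n, E_A(n) ≥ D_A(n) + n − 1. -/
/-- For any nonempty finite set `A ⊆ ℤ` and positive integer `n`,
`E_A(n) ≥ D_A(n) + n - 1`, where `D` and `E` are characterized as the least
elements of the corresponding sets. -/
theorem weighted_EGZ_lower_bound (n : ℕ) (hn : 0 < n) (A : Finset ℤ) (hA : A.Nonempty)
    (D E : ℕ)
    (hD : IsLeast {k : ℕ | ∀ x : Fin k → ZMod n, ∃ (s : Finset (Fin k)) (w : Fin k → ℤ),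
      s.Nonempty ∧ (∀ i ∈ s, w i ∈ A) ∧ ∑ i ∈ s, w i • x i = 0} D)
    (hE : IsLeast {k : ℕ | ∀ x : Fin k → ZMod n, ∃ (s : Finset (Fin k)) (w : Fin k → ℤ),
      s.card = n ∧ (∀ i ∈ s, w i ∈ A) ∧ ∑ i ∈ s, w i • x i = 0} E) :
    E ≥ D + n - 1 := by
  have hD1 : 1 ≤ D := by
    by_contra h
    push_neg at h
    interval_cases D
    obtain ⟨s, w, hs, -, -⟩ := hD.1 (fun _ => 0)
    exact hs.choose.elim0
  have hnE : n ≤ E := by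
    obtain ⟨s, w, hs, -, -⟩ := hE.1 (fun _ => 0)
    calc n = s.card := hs.symm
      _ ≤ (Finset.univ : Finset (Fin E)).card := s.card_le_univ
      _ = E := by simp
  by_contra hcon
  push_neg at hcon
  rcases eq_or_lt_of_le hD1 with hDeq | hD2
  · omega
  set d := D - 1 with hd
  have hd1 : 0 < d := by omega
  have hEd : E ≤ d + (n - 1) := by omega
  have hmem : d ∈ {k : ℕ | ∀ x : Fin k → ZMod n, ∃ (s : Finset (Fin k)) (w : Fin k → ℤ),
      s.Nonempty ∧ (∀ i ∈ s, w i ∈ A) ∧ ∑ i ∈ s, w i • x i = 0} := by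
    intro x
    set z : Fin E → ZMod n := fun i => if h : (i : ℕ) < d then x ⟨i, h⟩ else 0 with hz
    obtain ⟨s, w, hcard, hw, hsum⟩ := hE.1 z
    set s₁ := s.filter (fun i : Fin E => (i : ℕ) < d) with hs₁
    set s₂ := s.filter (fun i : Fin E => ¬ (i : ℕ) < d) with hs₂
    have hs2card : s₂.card ≤ n - 1 := by
      have hsub : s₂.image Fin.val ⊆ Finset.Ico d E := by
        intro m hm
        simp only [hs₂, Finset.mem_image, Finset.mem_filter] at hm
        obtain ⟨i, ⟨-, hi⟩, rfl⟩ := hm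
        exact Finset.mem_Ico.2 ⟨by omega, i.isLt⟩
      have h2 := Finset.card_le_card hsub
      rw [Finset.card_image_of_injective _ Fin.val_injective, Nat.card_Ico] at h2
      omega
    have hsplit : s₁.card + s₂.card = s.card :=
      Finset.card_filter_add_card_filter_not _
    have hs₁ne : s₁.Nonempty := by
      rw [← Finset.card_pos]
      omega
    set g : Fin E → Fin d := fun i => if h : (i : ℕ) < d then ⟨i, h⟩ else ⟨0, hd1⟩ with hg
    have hgval : ∀ i ∈ s₁, ((g i : Fin d) : ℕ) = (i : ℕ) := by
      intro i hi
      have : (i : ℕ) < d := (Finset.mem_filter.1 hi).2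
      simp [hg, this]
    set w' : Fin d → ℤ := fun j => if h : (j : ℕ) < E then w ⟨j, h⟩ else 0 with hw'
    have hw'g : ∀ i ∈ s₁, w' (g i) = w i := by
      intro i hi
      have hlt : ((g i : Fin d) : ℕ) < E := by rw [hgval i hi]; exact i.isLt
      simp only [hw', dif_pos hlt]
      congr 1
      ext
      exact hgval i hi
    have hginj : Set.InjOn g s₁ := by
      intro a ha b hb hab
      have : ((g a : Fin d) : ℕ) = ((g b : Fin d) : ℕ) := by rw [hab]
      rw [hgval a ha, hgval b hb] at this
      exact Fin.val_injective this
    refine ⟨s₁.image g, w', hs₁ne.image g, ?_, ?_⟩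
    · intro j hj
      obtain ⟨i, hi, rfl⟩ := Finset.mem_image.1 hj
      rw [hw'g i hi]
      exact hw i (Finset.mem_filter.1 hi).1
    · rw [Finset.sum_image hginj]
      rw [← Finset.sum_filter_add_sum_filter_not s (fun i : Fin E => (i : ℕ) < d)] at hsum
      have hzero : ∑ i ∈ s₂, w i • z i = 0 := by
        apply Finset.sum_eq_zero
        intro i hi
        have : ¬ (i : ℕ) < d := (Finset.mem_filter.1 hi).2
        simp [hz, this]
      rw [hzero, add_zero] at hsum
      rw [← hsum]
      apply Finset.sum_congr rfl
      intro i hi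
      have hlt : (i : ℕ) < d := (Finset.mem_filter.1 hi).2
      rw [hw'g i hi]
      congr 1
      simp only [hz, dif_pos hlt]
      congr 1
      ext
      exact hgval i hi
    
  have := hD.2 hmem
  omega
end

section
/- Let G be a finite abelian group of order n, exponent m, and Davenport constant D(G). For every sequence S in G with |S| ≥ n + D(G) − 1, we have 0 ∈ Σ_{km}(S) for every integer k with 1 ≤ k ≤ (|S| + 1 − D(G))/m. -/
open Finset Pointwise


/-- Scherk's theorem: if `0 ∈ A`, `0 ∈ B` and the only solution of `a + b = 0` with
`a ∈ A`, `b ∈ B` is the trivial one, then `|A + B| ≥ |A| + |B| - 1`. -/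
theorem scherk_aux {G : Type*} [AddCommGroup G] [Fintype G] [DecidableEq G] :
    ∀ (N : ℕ) (A B : Finset G), B.card ≤ N → (0 : G) ∈ A → (0 : G) ∈ B →
      (∀ a ∈ A, ∀ b ∈ B, a + b = 0 → a = 0) →
      A.card + B.card ≤ (A + B).card + 1 := by
  intro N
  induction N with
  | zero =>
    intro A B hcard hA hB _
    exact absurd (Finset.card_pos.mpr ⟨0, hB⟩) (by omega)
  | succ N ih =>
    intro A B hcard hA hB huniq
    by_cases hstuck : ∀ a ∈ A, ∀ b ∈ B, a + b ∈ A
    · -- stuck case : B = {0}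
      have hsmul : ∀ b ∈ B, ∀ k : ℕ, k • b ∈ A := by
        intro b hb k
        induction k with
        | zero => simpa using hA
        | succ k ihk =>
          have : k • b + b ∈ A := hstuck _ ihk _ hb
          simpa [succ_nsmul] using this
      have hBzero : ∀ b ∈ B, b = 0 := by
        intro b hb
        have hpos : 0 < addOrderOf b := addOrderOf_pos b
        have ha : (addOrderOf b - 1) • b ∈ A := hsmul b hb _
        have hsum : (addOrderOf b - 1) • b + b = 0 := by
          have : (addOrderOf b - 1) • b + b = addOrderOf b • b := by
            rw [← succ_nsmul]
            congr 1
            omega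
          rw [this, addOrderOf_nsmul_eq_zero]
        have h0 : (addOrderOf b - 1) • b = 0 := huniq _ ha b hb hsum
        rw [h0, zero_add] at hsum
        exact hsum
      have hBeq : B = {0} := by
        apply Finset.eq_singleton_iff_unique_mem.mpr
        exact ⟨hB, hBzero⟩
      subst hBeq
      have : A + ({0} : Finset G) = A := by
        simp [Finset.add_singleton]
      rw [this]
      simp
    · -- transform case
      push_neg at hstuck
      obtain ⟨a, ha, b₀, hb₀, hab₀⟩ := hstuck
      set B' : Finset G := B.filter (fun b => a + b ∈ A) with hB'def
      set A' : Finset G := A ∪ B.image (· + a) with hA'def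
      have hB'sub : B' ⊆ B := Finset.filter_subset _ _
      have hb₀notB' : b₀ ∉ B' := by
        simp [hB'def, hab₀, hb₀]
      have hB'lt : B'.card < B.card :=
        Finset.card_lt_card ⟨hB'sub, fun hsub => hb₀notB' (hsub hb₀)⟩
      have h0A' : (0 : G) ∈ A' := Finset.mem_union_left _ hA
      have h0B' : (0 : G) ∈ B' := by
        simp [hB'def, hB, ha]
      -- uniqueness condition for (A', B')
      have huniq' : ∀ a' ∈ A', ∀ b' ∈ B', a' + b' = 0 → a' = 0 := by
        intro a' ha' b' hb' hsum
        have hb'B : b' ∈ B := hB'sub hb'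
        rcases Finset.mem_union.mp ha' with h | h
        · exact huniq _ h _ hb'B hsum
        · obtain ⟨b₁, hb₁, rfl⟩ := Finset.mem_image.mp h
          have hα : a + b' ∈ A := (Finset.mem_filter.mp hb').2
          have hsum2 : (a + b') + b₁ = 0 := by
            rw [← hsum]; abel
          have hα0 : a + b' = 0 := huniq _ hα _ hb₁ hsum2
          have ha0 : a = 0 := huniq _ ha _ hb'B hα0
          have hb'0 : b' = 0 := by rw [ha0, zero_add] at hα0; exact hα0
          rw [hb'0, add_zero] at hsum
          exact hsum
      have hsubset : A' + B' ⊆ A + B := by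
        intro x hx
        rw [Finset.mem_add] at hx ⊢
        obtain ⟨a', ha', b', hb', rfl⟩ := hx
        have hb'B : b' ∈ B := hB'sub hb'
        rcases Finset.mem_union.mp ha' with h | h
        · exact ⟨a', h, b', hb'B, rfl⟩
        · obtain ⟨b₁, hb₁, rfl⟩ := Finset.mem_image.mp h
          have hα : a + b' ∈ A := (Finset.mem_filter.mp hb').2
          exact ⟨a + b', hα, b₁, hb₁, by abel⟩
      -- cardinality bookkeeping
      have himg : (B.filter (fun b => a + b ∉ A)).image (· + a) = (B.image (· + a)) \ A := by
        ext c
        simp only [Finset.mem_image, Finset.mem_filter, Finset.mem_sdiff]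
        constructor
        · rintro ⟨b, ⟨hbB, hbnA⟩, rfl⟩
          exact ⟨⟨b, hbB, rfl⟩, by rwa [add_comm] at hbnA⟩
        · rintro ⟨⟨b, hbB, rfl⟩, hcnA⟩
          exact ⟨b, ⟨hbB, by rwa [add_comm]⟩, rfl⟩
      have hinj : Function.Injective (· + a) := add_left_injective a
      have hcard1 : A'.card = A.card + ((B.image (· + a)) \ A).card := by
        rw [hA'def, ← Finset.union_sdiff_self_eq_union]
        exact Finset.card_union_of_disjoint Finset.disjoint_sdiff
      have hcard2 : B.card = B'.card + ((B.image (· + a)) \ A).card := by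
        rw [← himg, Finset.card_image_of_injective _ hinj]
        rw [hB'def]
        have := Finset.card_filter_add_card_filter_not (s := B)
          (p := fun b => a + b ∈ A)
        omega
      have hIH := ih A' B' (by omega) h0A' h0B' huniq'
      have hmono := Finset.card_le_card hsubset
      omega

/-- Gao's lemma: a sequence of at least `|G|` nonzero elements with all multiplicities
at most `c` has a nonempty zero-sum subsequence of size at most `c`. -/
theorem gao_lemma {G : Type*} [AddCommGroup G] [Fintype G] [DecidableEq G]
    {ι : Type*} [DecidableEq ι] (y : ι → G) (s : Finset ι)
    (hz : ∀ i ∈ s, y i ≠ 0) (hcard : Fintype.card G ≤ s.card) (c : ℕ)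
    (hmult : ∀ g : G, (s.filter (fun i => y i = g)).card ≤ c) :
    ∃ P ⊆ s, P.Nonempty ∧ P.card ≤ c ∧ ∑ i ∈ P, y i = 0 := by
  by_contra hno
  push_neg at hno
  -- hno : ∀ P ⊆ s, P.Nonempty → P.card ≤ c → ∑ i ∈ P, y i ≠ 0
  set cnt : G → ℕ := fun g => (s.filter (fun i => y i = g)).card with hcnt
  set A : ℕ → Finset G :=
    fun j => (s.powerset.filter fun T => T.card ≤ j).image fun T => ∑ i ∈ T, y i with hA
  set X : ℕ → Finset G := fun j => (s.image y).filter fun g => j ≤ cnt g with hX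
  have hmemA : ∀ j (T : Finset ι), T ⊆ s → T.card ≤ j → (∑ i ∈ T, y i) ∈ A j := by
    intro j T hTs hTc
    exact Finset.mem_image.mpr ⟨T, Finset.mem_filter.mpr
      ⟨Finset.mem_powerset.mpr hTs, hTc⟩, rfl⟩
  have h0A : ∀ j, (0 : G) ∈ A j := by
    intro j
    simpa using hmemA j ∅ (Finset.empty_subset s) (by simp)
  -- key insertion construction
  have hins : ∀ j, ∀ T ⊆ s, T.card ≤ j → ∀ g ∈ X (j + 1),
      ∃ i ∈ s, i ∉ T ∧ y i = g := by
    intro j T hTs hTc g hg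
    have hcnt' : j + 1 ≤ cnt g := (Finset.mem_filter.mp hg).2
    have hsub : T.filter (fun i => y i = g) ⊆ s.filter (fun i => y i = g) :=
      Finset.filter_subset_filter _ hTs
    have hlt : (T.filter (fun i => y i = g)).card < (s.filter (fun i => y i = g)).card := by
      have h1 : (T.filter (fun i => y i = g)).card ≤ T.card := Finset.card_filter_le _ _
      have h2 : cnt g = (s.filter (fun i => y i = g)).card := rfl
      omega
    obtain ⟨i, hi1, hi2⟩ : ∃ i ∈ s.filter (fun i => y i = g),
        i ∉ T.filter (fun i => y i = g) := by
      by_contra hcon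
      push_neg at hcon
      exact absurd (Finset.card_le_card hcon) (by omega)
    rw [Finset.mem_filter] at hi1
    refine ⟨i, hi1.1, fun hiT => hi2 ?_, hi1.2⟩
    exact Finset.mem_filter.mpr ⟨hiT, hi1.2⟩
  have h0notX : ∀ j, (0 : G) ∉ X j := by
    intro j hj
    rw [hX] at hj
    obtain ⟨i, hi, hyi⟩ := Finset.mem_image.mp (Finset.mem_filter.mp hj).1
    exact hz i hi hyi
  -- growth step
  have hgrow : ∀ j, j < c → (A j).card + (X (j + 1)).card ≤ (A (j + 1)).card := by
    intro j hj
    have hsub : A j + insert 0 (X (j + 1)) ⊆ A (j + 1) := by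
      intro v hv
      rw [Finset.mem_add] at hv
      obtain ⟨a, haA, b, hbB, rfl⟩ := hv
      obtain ⟨T, hT, rfl⟩ := Finset.mem_image.mp haA
      rw [Finset.mem_filter, Finset.mem_powerset] at hT
      rcases Finset.mem_insert.mp hbB with rfl | hbX
      · rw [add_zero]
        exact hmemA _ T hT.1 (by omega)
      · obtain ⟨i, his, hiT, hyi⟩ := hins j T hT.1 hT.2 b hbX
        have : ∑ i' ∈ insert i T, y i' = ∑ i' ∈ T, y i' + b := by
          rw [Finset.sum_insert hiT, hyi, add_comm]
        rw [← this]
        exact hmemA _ _ (Finset.insert_subset his hT.1)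
          (by rw [Finset.card_insert_of_notMem hiT]; omega)
    have huniq : ∀ a ∈ A j, ∀ b ∈ insert 0 (X (j + 1)), a + b = 0 → a = 0 := by
      intro a haA b hbB hab
      rcases Finset.mem_insert.mp hbB with rfl | hbX
      · rwa [add_zero] at hab
      · exfalso
        obtain ⟨T, hT, rfl⟩ := Finset.mem_image.mp haA
        rw [Finset.mem_filter, Finset.mem_powerset] at hT
        obtain ⟨i, his, hiT, hyi⟩ := hins j T hT.1 hT.2 b hbX
        have hsum : ∑ i' ∈ insert i T, y i' = 0 := by
          rw [Finset.sum_insert hiT, hyi, add_comm]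
          exact hab
        exact hno (insert i T) (Finset.insert_subset his hT.1) ⟨i, Finset.mem_insert_self _ _⟩
          (by rw [Finset.card_insert_of_notMem hiT]; omega) hsum
    have hscherk := scherk_aux (insert 0 (X (j + 1))).card (A j) (insert 0 (X (j + 1)))
      le_rfl (h0A j) (Finset.mem_insert_self _ _) huniq
    have hmono := Finset.card_le_card hsub
    have hcardins : (insert 0 (X (j + 1))).card = (X (j + 1)).card + 1 :=
      Finset.card_insert_of_notMem (h0notX _)
    omega
  -- chain the growth
  have hchain : ∀ J, J ≤ c → 1 + ∑ j ∈ Finset.range J, (X (j + 1)).card ≤ (A J).card := by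
    intro J
    induction J with
    | zero =>
      intro _
      simpa using Finset.card_pos.mpr ⟨0, h0A 0⟩
    | succ J ihJ =>
      intro hJ
      have h1 := ihJ (by omega)
      have h2 := hgrow J (by omega)
      rw [Finset.sum_range_succ]
      omega
  -- double counting: ∑_{j<c} |X (j+1)| = s.card
  have hcount : ∑ j ∈ Finset.range c, (X (j + 1)).card = s.card := by
    have h1 : ∀ j, (X j).card = ∑ g ∈ s.image y, if j ≤ cnt g then 1 else 0 := by
      intro j
      rw [hX, Finset.card_filter]
    calc ∑ j ∈ Finset.range c, (X (j + 1)).card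
        = ∑ j ∈ Finset.range c, ∑ g ∈ s.image y, if j + 1 ≤ cnt g then 1 else 0 := by
          simp_rw [h1]
      _ = ∑ g ∈ s.image y, ∑ j ∈ Finset.range c, if j + 1 ≤ cnt g then 1 else 0 :=
          Finset.sum_comm
      _ = ∑ g ∈ s.image y, cnt g := by
          apply Finset.sum_congr rfl
          intro g _
          have hgc : cnt g ≤ c := hmult g
          rw [← Finset.card_filter]
          have : (Finset.range c).filter (fun j => j + 1 ≤ cnt g) = Finset.range (cnt g) := by
            ext j
            simp only [Finset.mem_filter, Finset.mem_range]
            omega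
          rw [this, Finset.card_range]
      _ = s.card := (Finset.card_eq_sum_card_image y s).symm
  have hle : (A c).card ≤ Fintype.card G := Finset.card_le_univ _
  have := hchain c le_rfl
  omega

section Ext

variable {G : Type*} [AddCommGroup G] {ι : Type*} [DecidableEq ι]

/-- Phase-2 extraction: from a set of size ≥ L + D - 1 extract a zero-sum subset of
size in [L, L + D - 1]. -/
theorem ext1 (y : ι → G) (D : ℕ) (hD1 : 1 ≤ D)
    (pf : ∀ R' : Finset ι, D ≤ R'.card →
      ∃ P ⊆ R', P.Nonempty ∧ P.card ≤ D ∧ ∑ i ∈ P, y i = 0) :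
    ∀ (L : ℕ) (R : Finset ι), L + D ≤ R.card + 1 →
      ∃ U ⊆ R, (∑ i ∈ U, y i = 0) ∧ L ≤ U.card ∧ U.card + 1 ≤ L + D := by
  intro L
  induction L using Nat.strong_induction_on with
  | _ L ih =>
    intro R hR
    rcases Nat.eq_zero_or_pos L with rfl | hLpos
    · exact ⟨∅, Finset.empty_subset _, by simp, by simp, by simpa using hD1⟩
    · obtain ⟨P, hPR, hPne, hPD, hPsum⟩ := pf R (by omega)
      have hPcard : 1 ≤ P.card := Finset.card_pos.mpr hPne
      by_cases hPL : L ≤ P.card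
      · exact ⟨P, hPR, hPsum, hPL, by omega⟩
      · push_neg at hPL
        have hRP : (R \ P).card = R.card - P.card := Finset.card_sdiff_of_subset hPR
        have hPcard' : P.card ≤ R.card := Finset.card_le_card hPR
        obtain ⟨U', hU'sub, hU'sum, hU'lb, hU'ub⟩ :=
          ih (L - P.card) (by omega) (R \ P) (by omega)
        refine ⟨U' ∪ P, ?_, ?_, ?_, ?_⟩
        · exact Finset.union_subset (hU'sub.trans (Finset.sdiff_subset)) hPR
        · have hdisj : Disjoint U' P :=
            Finset.disjoint_of_subset_left hU'sub Finset.sdiff_disjoint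
          rw [Finset.sum_union hdisj, hU'sum, hPsum, add_zero]
        · have hdisj : Disjoint U' P :=
            Finset.disjoint_of_subset_left hU'sub Finset.sdiff_disjoint
          rw [Finset.card_union_of_disjoint hdisj]
          omega
        · have hdisj : Disjoint U' P :=
            Finset.disjoint_of_subset_left hU'sub Finset.sdiff_disjoint
          rw [Finset.card_union_of_disjoint hdisj]
          omega

/-- Phase-1 extraction with coverage: extract small pieces from `N` until fewer than `n`
elements remain; every size up to the extracted total (with slack `h`) is achieved by some
zero-sum subset of the extracted part. -/
theorem ext2 (y : ι → G) (n h : ℕ) :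
    ∀ (fuel : ℕ) (N : Finset ι), N.card ≤ fuel →
    (∀ R' ⊆ N, n ≤ R'.card →
      ∃ P ⊆ R', P.Nonempty ∧ P.card ≤ h ∧ ∑ i ∈ P, y i = 0) →
    ∃ R ⊆ N, R.card < n ∧
      ∀ v : ℕ, v + R.card ≤ N.card + h →
        ∃ C ⊆ N \ R, (∑ i ∈ C, y i = 0) ∧ C.card ≤ v ∧ v ≤ C.card + h := by
  intro fuel
  induction fuel with
  | zero =>
    intro N hN pf
    -- N empty (card ≤ 0); but handle uniformly: card < n? need n ≥ 1? Use case: if n = 0 then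
    -- pf on R' = N with card 0 ... n = 0 gives piece from empty?? guard: n ≥ 1 not assumed.
    -- If n = 0: pf ∅ gives nonempty P ⊆ ∅: contradiction, so n = 0 impossible unless...
    rcases Nat.eq_zero_or_pos n with hn0 | hnpos
    · obtain ⟨P, hP, hPne, _, _⟩ := pf ∅ (Finset.empty_subset _) (by omega)
      obtain ⟨i, hi⟩ := hPne
      exact absurd (hP hi) (by simp)
    · refine ⟨N, Finset.Subset.refl _, by omega, ?_⟩
      intro v hv
      exact ⟨∅, by simp, by simp, by simp, by simp; omega⟩
  | succ fuel ih =>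
    intro N hN pf
    by_cases hsize : N.card < n
    · refine ⟨N, Finset.Subset.refl _, hsize, ?_⟩
      intro v hv
      exact ⟨∅, by simp, by simp, by simp, by simp; omega⟩
    · push_neg at hsize
      obtain ⟨P, hPN, hPne, hPh, hPsum⟩ := pf N (Finset.Subset.refl _) hsize
      have hPcard : 1 ≤ P.card := Finset.card_pos.mpr hPne
      have hPle : P.card ≤ N.card := Finset.card_le_card hPN
      set N' := N \ P with hN'def
      have hN'card : N'.card = N.card - P.card := Finset.card_sdiff_of_subset hPN
      have pf' : ∀ R' ⊆ N', n ≤ R'.card →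
          ∃ Q ⊆ R', Q.Nonempty ∧ Q.card ≤ h ∧ ∑ i ∈ Q, y i = 0 :=
        fun R' hR' hc => pf R' (hR'.trans (Finset.sdiff_subset)) hc
      obtain ⟨R, hRN', hRcard, hcov⟩ := ih N' (by omega) pf'
      have hRN : R ⊆ N := hRN'.trans (Finset.sdiff_subset)
      have hRle : R.card ≤ N'.card := Finset.card_le_card hRN'
      refine ⟨R, hRN, hRcard, ?_⟩
      intro v hv
      by_cases hcase : v + R.card ≤ N'.card + h
      · obtain ⟨C, hCsub, hCsum, hC1, hC2⟩ := hcov v hcase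
        refine ⟨C, ?_, hCsum, hC1, hC2⟩
        intro i hi
        have hmem := hCsub hi
        rw [Finset.mem_sdiff, hN'def, Finset.mem_sdiff] at hmem
        exact Finset.mem_sdiff.mpr ⟨hmem.1.1, hmem.2⟩
      · push_neg at hcase
        -- v > N'.card + h - R.card ≥ h ≥ P.card, so v ≥ P.card
        have hvP : P.card ≤ v := by omega
        obtain ⟨C', hC'sub, hC'sum, hC'1, hC'2⟩ := hcov (v - P.card) (by omega)
        have hPsubNR : P ⊆ N \ R := by
          intro i hi
          rw [Finset.mem_sdiff]
          refine ⟨hPN hi, fun hiR => ?_⟩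
          have := hRN' hiR
          rw [hN'def, Finset.mem_sdiff] at this
          exact this.2 hi
        have hC'subNR : C' ⊆ N \ R := by
          intro i hi
          have := hC'sub hi
          rw [Finset.mem_sdiff] at this ⊢
          rw [hN'def, Finset.mem_sdiff] at this
          exact ⟨this.1.1, this.2⟩
        have hdisj : Disjoint C' P := by
          apply Finset.disjoint_left.mpr
          intro i hi hiP
          have := hC'sub hi
          rw [Finset.mem_sdiff, hN'def, Finset.mem_sdiff] at this
          exact this.1.2 hiP
        refine ⟨C' ∪ P, Finset.union_subset hC'subNR hPsubNR, ?_, ?_, ?_⟩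
        · rw [Finset.sum_union hdisj, hC'sum, hPsum, add_zero]
        · rw [Finset.card_union_of_disjoint hdisj]; omega
        · rw [Finset.card_union_of_disjoint hdisj]; omega

end Ext

/-- Theorem YZ, second part: for every sequence `S` of length `|S| ≥ n + D(G) - 1`,
`0 ∈ Σ_{km}(S)` for every `1 ≤ k ≤ (|S| + 1 - D(G))/m`, where `m` is the exponent. -/
theorem yz_exponent {G : Type*} [AddCommGroup G] [Fintype G]
    (n : ℕ) (hn : n = Fintype.card G)
    (m : ℕ) (hm : m = AddMonoid.exponent G)
    (D : ℕ)
    (hD : IsLeast {k : ℕ | ∀ y : Fin k → G, ∃ s : Finset (Fin k),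
      s.Nonempty ∧ ∑ i ∈ s, y i = 0} D)
    (t : ℕ) (x : Fin t → G) (ht : n + D - 1 ≤ t) :
    ∀ k : ℕ, 1 ≤ k → k * m + D ≤ t + 1 →
      ∃ u : Finset (Fin t), u.card = k * m ∧ ∑ i ∈ u, x i = 0 := by
  classical
  intro k hk hkm
  have hDmem := hD.1
  -- D ≥ 1
  have hD1 : 1 ≤ D := by
    by_contra hcon
    push_neg at hcon
    interval_cases D
    obtain ⟨s, hs, -⟩ := hDmem (fun i : Fin 0 => (0 : G))
    obtain ⟨i, -⟩ := hs
    exact i.elim0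
  have hn1 : 1 ≤ n := by rw [hn]; exact Fintype.card_pos
  -- choose a maximum-multiplicity element and translate
  set cntx : G → ℕ := fun g => ((Finset.univ : Finset (Fin t)).filter fun i => x i = g).card
    with hcntx
  obtain ⟨g₀, -, hg₀⟩ := Finset.exists_max_image (Finset.univ : Finset G) cntx
    ⟨0, Finset.mem_univ 0⟩
  set h : ℕ := cntx g₀ with hh
  set y : Fin t → G := fun i => x i - g₀ with hy
  have hcnty : ∀ v : G, ((Finset.univ : Finset (Fin t)).filter fun i => y i = v).card
      = cntx (v + g₀) := by
    intro v
    have hfeq : ((Finset.univ : Finset (Fin t)).filter fun i => y i = v)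
        = ((Finset.univ : Finset (Fin t)).filter fun i => x i = v + g₀) := by
      ext i
      simp [hy, sub_eq_iff_eq_add]
    rw [hfeq, hcntx]
  have hcntyh : ∀ v : G, ((Finset.univ : Finset (Fin t)).filter fun i => y i = v).card ≤ h := by
    intro v
    rw [hcnty v]
    exact hg₀ _ (Finset.mem_univ _)
  set Z : Finset (Fin t) := (Finset.univ : Finset (Fin t)).filter (fun i => y i = 0) with hZ
  set N : Finset (Fin t) := (Finset.univ : Finset (Fin t)).filter (fun i => ¬ (y i = 0)) with hN
  have hZcard : Z.card = h := by
    rw [hZ, hcnty 0, zero_add]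
  have hZN : Z.card + N.card = t := by
    rw [hZ, hN]
    rw [Finset.card_filter_add_card_filter_not]
    simp
  -- piece finder for phase 1 (Gao's lemma)
  have pf1 : ∀ R' ⊆ N, n ≤ R'.card →
      ∃ P ⊆ R', P.Nonempty ∧ P.card ≤ h ∧ ∑ i ∈ P, y i = 0 := by
    intro R' hR' hcardR'
    apply gao_lemma y R'
    · intro i hi
      have := hR' hi
      rw [hN, Finset.mem_filter] at this
      exact this.2
    · rw [← hn]; exact hcardR'
    · intro g
      calc (R'.filter fun i => y i = g).card
          ≤ ((Finset.univ : Finset (Fin t)).filter fun i => y i = g).card :=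
            Finset.card_le_card (Finset.filter_subset_filter _ (Finset.subset_univ R'))
        _ ≤ h := hcntyh g
  -- piece finder for phase 2 (from the Davenport property)
  have pfD : ∀ R' : Finset (Fin t), D ≤ R'.card →
      ∃ P ⊆ R', P.Nonempty ∧ P.card ≤ D ∧ ∑ i ∈ P, y i = 0 := by
    intro R' hcardR'
    obtain ⟨R'', hR''sub, hR''card⟩ := Finset.exists_subset_card_eq (s := R') (n := D) hcardR'
    have e : Fin D ≃ {i // i ∈ R''} := (R''.equivFin.trans (finCongr hR''card)).symm
    obtain ⟨s₀, hs₀ne, hs₀sum⟩ := hDmem (fun a => y ((e a : {i // i ∈ R''}) : Fin t))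
    have hinj : Function.Injective (fun a : Fin D => ((e a : {i // i ∈ R''}) : Fin t)) :=
      fun a b hab => e.injective (Subtype.val_injective hab)
    refine ⟨s₀.image (fun a => ((e a : {i // i ∈ R''}) : Fin t)), ?_, ?_, ?_, ?_⟩
    · intro i hi
      obtain ⟨a, -, rfl⟩ := Finset.mem_image.mp hi
      exact hR''sub (e a).2
    · exact hs₀ne.image _
    · rw [Finset.card_image_of_injective _ hinj]
      calc s₀.card ≤ Fintype.card (Fin D) := Finset.card_le_univ s₀
        _ = D := Fintype.card_fin D
    · rw [Finset.sum_image (fun a _ b _ hab => hinj hab)]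
      exact hs₀sum
  -- run phase 1
  obtain ⟨R, hRN, hRcard, hcov⟩ := ext2 y n h N.card N le_rfl pf1
  have hRle : R.card ≤ N.card := Finset.card_le_card hRN
  have htN : N.card + h = t := by omega
  have hZdisjN : ∀ i, i ∈ Z → i ∈ N → False := by
    intro i hiZ hiN
    rw [hZ, Finset.mem_filter] at hiZ
    rw [hN, Finset.mem_filter] at hiN
    exact hiN.2 hiZ.2
  -- a helper to build the final set from a phase-2 part U ⊆ R and a target total k*m
  have build : ∀ U ⊆ R, (∑ i ∈ U, y i = 0) → U.card ≤ k * m →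
      k * m + R.card ≤ N.card + h + U.card ->
      ∃ u : Finset (Fin t), u.card = k * m ∧ ∑ i ∈ u, y i = 0 := by
    intro U hUR hUsum hUle hUge
    obtain ⟨C, hCsub, hCsum, hC1, hC2⟩ := hcov (k * m - U.card) (by omega)
    obtain ⟨PZ, hPZsub, hPZcard⟩ := Finset.exists_subset_card_eq (s := Z) (n := k * m - U.card - C.card)
      (by omega)
    have hCN : ∀ i ∈ C, i ∈ N := fun i hi => (Finset.mem_sdiff.mp (hCsub hi)).1
    have hCnR : ∀ i ∈ C, i ∉ R := fun i hi => (Finset.mem_sdiff.mp (hCsub hi)).2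
    have hdCU : Disjoint C U := Finset.disjoint_left.mpr
      (fun i hiC hiU => hCnR i hiC (hUR hiU))
    have hdCPZ : Disjoint C PZ := Finset.disjoint_left.mpr
      (fun i hiC hiPZ => hZdisjN i (hPZsub hiPZ) (hCN i hiC))
    have hdUPZ : Disjoint U PZ := Finset.disjoint_left.mpr
      (fun i hiU hiPZ => hZdisjN i (hPZsub hiPZ) (hRN (hUR hiU)))
    have hdisj : Disjoint (C ∪ U) PZ := Finset.disjoint_union_left.mpr ⟨hdCPZ, hdUPZ⟩
    refine ⟨(C ∪ U) ∪ PZ, ?_, ?_⟩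
    · rw [Finset.card_union_of_disjoint hdisj, Finset.card_union_of_disjoint hdCU, hPZcard]
      omega
    · rw [Finset.sum_union hdisj, Finset.sum_union hdCU, hCsum, hUsum]
      have : ∑ i ∈ PZ, y i = 0 := by
        apply Finset.sum_eq_zero
        intro i hi
        have := hPZsub hi
        rw [hZ, Finset.mem_filter] at this
        exact this.2
      rw [this]
      simp
  -- get the zero-sum set of size k*m for the translated sequence
  have hmain : ∃ u : Finset (Fin t), u.card = k * m ∧ ∑ i ∈ u, y i = 0 := by
    by_cases hcase : k * m + R.card ≤ N.card + h
    · exact build ∅ (Finset.empty_subset _) (by simp) (by simp) (by simpa using hcase)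
    · push_neg at hcase
      obtain ⟨U, hUR, hUsum, hU1, hU2⟩ := ext1 y D hD1 pfD
        (k * m + R.card - (N.card + h)) R (by omega)
      apply build U hUR hUsum (by omega) (by omega)
  obtain ⟨u, hucard, husum⟩ := hmain
  refine ⟨u, hucard, ?_⟩
  have hxy : ∀ i, x i = y i + g₀ := by
    intro i
    simp [hy]
  have hsum : ∑ i ∈ u, x i = (∑ i ∈ u, y i) + u.card • g₀ := by
    rw [← Finset.sum_const]
    rw [← Finset.sum_add_distrib]
    exact Finset.sum_congr rfl (fun i _ => hxy i)
  rw [hsum, husum, zero_add, hucard]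
  have hexp : m • g₀ = 0 := by
    rw [hm]
    exact AddMonoid.exponent_nsmul_eq_zero g₀
  rw [mul_comm, mul_nsmul]
  rw [hexp]
  simp
end

section
/- Let n be a positive integer, A a nonempty finite set of integers, and suppose H is a subgroup of ℤ/nℤ such that for elements x_1,...,x_r of ℤ/nℤ, the subgroup H_1 generated by x_1,...,x_r satisfies a·H_1 = H for some a ∈ A with A·x_i = {a·x_i} for each i. Then D_A(H_1) ≥ D(H) = |H|, where D_A(H_1) is the weighted Davenport constant of H_1 with weight set A and D(H) is the classical Davenport constant of H. -/
/-- Auxiliary: zero-sum block from equal prefix sums. -/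
theorem block_zero (n : ℕ) [NeZero n] (H : AddSubgroup (ZMod n)) (m : ℕ)
    (y : Fin m → H) (Y : ℕ → H) (hY : ∀ i (h : i < m), Y i = y ⟨i, h⟩)
    (j k : ℕ) (hjk : j < k) (hkm : k ≤ m)
    (hPe : ∑ i ∈ Finset.range j, Y i = ∑ i ∈ Finset.range k, Y i) :
    ∃ s : Finset (Fin m), s.Nonempty ∧ ∑ i ∈ s, (y i : ZMod n) = 0 := by
  have hmem : ∀ i ∈ Finset.Ico j k, i < m := fun i hi =>
    lt_of_lt_of_le (Finset.mem_Ico.mp hi).2 hkm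
  refine ⟨(Finset.Ico j k).attachFin hmem, ?_, ?_⟩
  · refine Finset.card_pos.mp ?_
    rw [Finset.card_attachFin, Nat.card_Ico]
    omega
  · have hsum : ∑ i ∈ (Finset.Ico j k).attachFin hmem, y i
        = ∑ i ∈ Finset.Ico j k, Y i := by
      refine Finset.sum_bij (fun (i : Fin m) (_ : i ∈ (Finset.Ico j k).attachFin hmem)
        => (i : ℕ)) ?_ ?_ ?_ ?_
      · intro i hi; rw [Finset.mem_attachFin] at hi; exact hi
      · intro i₁ _ i₂ _ h; exact Fin.val_injective h
      · intro i hi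
        exact ⟨⟨i, hmem i hi⟩, by rwa [Finset.mem_attachFin], rfl⟩
      · intro i hi
        exact (hY i i.isLt).symm.trans (by congr)
    have hdiff : ∑ i ∈ Finset.Ico j k, Y i
        = ∑ i ∈ Finset.range k, Y i - ∑ i ∈ Finset.range j, Y i :=
      Finset.sum_Ico_eq_sub _ hjk.le
    have hz : ∑ i ∈ (Finset.Ico j k).attachFin hmem, y i = 0 := by
      rw [hsum, hdiff, ← hPe, sub_self]
    calc ∑ i ∈ (Finset.Ico j k).attachFin hmem, (y i : ZMod n)
        = ((∑ i ∈ (Finset.Ico j k).attachFin hmem, y i : H) : ZMod n) := by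
          push_cast; ring
      _ = 0 := by rw [hz]; rfl

/-- Auxiliary: D(H) upper bound via pigeonhole on prefix sums. -/
theorem davenport_mem (n : ℕ) [NeZero n] (H : AddSubgroup (ZMod n)) (m : ℕ)
    (hm : Nat.card H ≤ m) :
    ∀ y : Fin m → H, ∃ s : Finset (Fin m),
      s.Nonempty ∧ ∑ i ∈ s, (y i : ZMod n) = 0 := by
  haveI : Fintype H := Fintype.ofFinite _
  intro y
  let Y : ℕ → H := fun i => if h : i < m then y ⟨i, h⟩ else 0
  let P : Fin (m + 1) → H := fun k => ∑ i ∈ Finset.range k, Y i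
  have hcard : Fintype.card H < Fintype.card (Fin (m + 1)) := by
    rw [← Nat.card_eq_fintype_card]
    simp only [Fintype.card_fin]
    omega
  obtain ⟨j, k, hjk, heq⟩ := Fintype.exists_ne_map_eq_of_card_lt P hcard
  have hY : ∀ i (h : i < m), Y i = y ⟨i, h⟩ := fun i h => by simp [Y, h]
  rcases lt_or_gt_of_ne (fun h => hjk (Fin.val_injective h)) with h | h
  · exact block_zero n H m y Y hY j k h (Nat.lt_succ_iff.mp k.isLt) heq
  · exact block_zero n H m y Y hY k j h (Nat.lt_succ_iff.mp j.isLt) heq.symm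

/-- The Claim: `D_A(H₁) ≥ D(H) = |H|`, where `H₁ = ⟨x₁,...,x_r⟩`, `H = a·H₁`,
`a ∈ A` and `A·x_i = {a·x_i}` for each `i`. -/
theorem claim_DA_ge_DH (n : ℕ) (hn : 0 < n) (A : Finset ℤ) (hA : A.Nonempty)
    (r : ℕ) (x : Fin r → ZMod n) (a : ℤ) (ha : a ∈ A)
    (hsingle : ∀ i, ∀ b ∈ A, b • x i = a • x i)
    (H : AddSubgroup (ZMod n))
    (hH : (H : Set (ZMod n)) =
      (fun g => a • g) '' (AddSubgroup.closure (Set.range x) : Set (ZMod n)))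
    (DA DH : ℕ)
    (hDA : IsLeast {k : ℕ |
      ∀ y : Fin k → (AddSubgroup.closure (Set.range x) : AddSubgroup (ZMod n)),
      ∃ (s : Finset (Fin k)) (w : Fin k → ℤ),
        s.Nonempty ∧ (∀ i ∈ s, w i ∈ A) ∧ ∑ i ∈ s, w i • (y i : ZMod n) = 0} DA)
    (hDH : IsLeast {k : ℕ | ∀ y : Fin k → H, ∃ s : Finset (Fin k),
      s.Nonempty ∧ ∑ i ∈ s, (y i : ZMod n) = 0} DH) :
    DA ≥ DH ∧ DH = Nat.card H := by
  haveI : NeZero n := ⟨hn.ne'⟩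
  -- Key: every weight in A acts on elements of the closure in the same way as a.
  have key : ∀ b ∈ A, ∀ g ∈ AddSubgroup.closure (Set.range x), b • g = a • g := by
    intro b hb
    have hle : AddSubgroup.closure (Set.range x) ≤
        (zsmulAddGroupHom (b - a) : ZMod n →+ ZMod n).ker := by
      rw [AddSubgroup.closure_le]
      rintro g ⟨i, rfl⟩
      simp only [SetLike.mem_coe, AddMonoidHom.mem_ker, zsmulAddGroupHom_apply,
        sub_smul, sub_eq_zero]
      exact hsingle i b hb
    intro g hg
    have := hle hg
    simpa [AddMonoidHom.mem_ker, zsmulAddGroupHom, sub_smul, sub_eq_zero] using this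
  constructor
  · -- DA ≥ DH
    refine hDH.2 ?_
    intro y
    have hz : ∀ i, ∃ z : (AddSubgroup.closure (Set.range x) : AddSubgroup (ZMod n)),
        a • (z : ZMod n) = (y i : ZMod n) := by
      intro i
      have hmem : (y i : ZMod n) ∈ (H : Set (ZMod n)) := (y i).2
      rw [hH] at hmem
      obtain ⟨g, hg, hgy⟩ := hmem
      exact ⟨⟨g, hg⟩, hgy⟩
    choose z hz using hz
    obtain ⟨s, w, hs, hw, hsum⟩ := hDA.1 z
    refine ⟨s, hs, ?_⟩
    calc ∑ i ∈ s, (y i : ZMod n) = ∑ i ∈ s, w i • ((z i : ZMod n)) := by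
          refine Finset.sum_congr rfl fun i hi => ?_
          rw [key (w i) (hw i hi) _ (z i).2, hz i]
      _ = 0 := hsum
  · -- DH = Nat.card H
    have hub : DH ≤ Nat.card H := hDH.2 (davenport_mem n H _ le_rfl)
    have hmpos : 0 < Nat.card H := Nat.card_pos
    refine le_antisymm hub (le_of_not_gt fun hlt => ?_)
    -- get a generator of H
    obtain ⟨g, hg⟩ := (inferInstance : IsAddCyclic H)
    have horder : addOrderOf g = Nat.card H :=
      addOrderOf_eq_card_of_forall_mem_zmultiples hg
    obtain ⟨s, hs, hsum⟩ := hDH.1 (fun _ => g)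
    have hsum' : (s.card • g : H) = 0 := by
      have : ((s.card • g : H) : ZMod n) = 0 := by
        push_cast
        simpa [Finset.sum_const] using hsum
      exact_mod_cast Subtype.coe_injective (by simpa using this)
    have hcard : 0 < s.card := Finset.card_pos.mpr hs
    have hle : addOrderOf g ≤ s.card := addOrderOf_le_of_nsmul_eq_zero hcard hsum'
    have : s.card ≤ DH := by
      simpa using Finset.card_le_card (Finset.subset_univ s) |>.trans (by simp)
    omega
end

section
/- Let G be a finite abelian group of order n. Then E(G) = D(G) + n − 1, where D(G) is the Davenport constant and E(G) is the least k such that every sequence of k elements in G has a zero-sum subsequence of length exactly n. -/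
set_option linter.unusedSectionVars false
set_option linter.deprecated false

open Finset Pointwise


section KS
variable {G : Type*} [AddCommGroup G] [DecidableEq G]

lemma sum_filter_card_eq {α β : Type*} [DecidableEq α] [DecidableEq β]
    (A : Finset α) (B : Finset β) (p : α → β → Prop) [∀ a b, Decidable (p a b)] :
    ∑ a ∈ A, (B.filter (p a)).card = ((A ×ˢ B).filter (fun x => p x.1 x.2)).card := by
  rw [Finset.card_filter, Finset.sum_product]
  exact Finset.sum_congr rfl fun a _ => (Finset.card_filter _ _)

lemma delta_sum_le (C X : Finset G) (hCX : C ⊆ X)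
    (hanti : ∀ x ∈ X, ∀ c ∈ C, x + c = 0 → c = 0) :
    ∑ g ∈ C, (C.filter (fun u => u - g ∉ C)).card
      ≤ ∑ g ∈ C, (X.filter (fun x => x - g ∉ X)).card := by
  rw [sum_filter_card_eq, sum_filter_card_eq]
  apply Finset.card_le_card_of_injOn (fun p => if p.2 - p.1 ∈ X then (p.2, p.2 - p.1) else p)
  · intro p hp
    rw [Finset.coe_filter, Set.mem_setOf_eq, Finset.mem_product] at hp
    obtain ⟨⟨hg, hu⟩, hnot⟩ := hp
    by_cases hcase : p.2 - p.1 ∈ X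
    · simp only [Finset.coe_filter, Set.mem_setOf_eq, if_pos hcase, Finset.mem_product]
      have hgne : p.1 ≠ 0 := by
        intro h0
        apply hnot
        rw [h0, sub_zero]
        exact hu
      have hneg : -p.1 ∉ X := fun hmem => hgne (hanti _ hmem _ hg (by abel))
      refine ⟨⟨hu, hcase⟩, ?_⟩
      have he : p.2 - p.1 - p.2 = -p.1 := by abel
      rw [he]
      exact hneg
    · simp only [Finset.coe_filter, Set.mem_setOf_eq, if_neg hcase, Finset.mem_product]
      exact ⟨⟨hg, hCX hu⟩, hcase⟩
  · intro p hp q hq heq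
    simp only [Finset.coe_filter, Set.mem_setOf_eq, Finset.mem_product] at hp hq
    obtain ⟨⟨hpg, hpu⟩, hpnot⟩ := hp
    obtain ⟨⟨hqg, hqu⟩, hqnot⟩ := hq
    simp only at heq
    by_cases hpc : p.2 - p.1 ∈ X <;> by_cases hqc : q.2 - q.1 ∈ X
    · rw [if_pos hpc, if_pos hqc] at heq
      have h1 : p.2 = q.2 := congrArg Prod.fst heq
      have h2 : p.2 - p.1 = q.2 - q.1 := congrArg Prod.snd heq
      rw [h1] at h2
      have h3 : q.2 + -p.1 = q.2 + -q.1 := by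
        rw [← sub_eq_add_neg, ← sub_eq_add_neg]; exact h2
      exact Prod.ext (neg_inj.mp (add_left_cancel h3)) h1
    · rw [if_pos hpc, if_neg hqc] at heq
      have h2 : p.2 - p.1 = q.2 := congrArg Prod.snd heq
      exact absurd (by rw [h2]; exact hqu) hpnot
    · rw [if_neg hpc, if_pos hqc] at heq
      have h2 : p.2 = q.2 - q.1 := congrArg Prod.snd heq
      exact absurd (by rw [← h2]; exact hpu) hqnot
    · rw [if_neg hpc, if_neg hqc] at heq
      exact heq

lemma exists_good_g (C X : Finset G) (hCX : C ⊆ X) (h2 : 2 ≤ C.card) (h0 : (0:G) ∈ C)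
    (hanti : ∀ x ∈ X, ∀ c ∈ C, x + c = 0 → c = 0) :
    ∃ g ∈ C, g ≠ 0 ∧
      (C.filter (fun u => u - g ∉ C)).card ≤ (X.filter (fun x => x - g ∉ X)).card := by
  by_contra hcon
  push_neg at hcon
  have hs := delta_sum_le C X hCX hanti
  have hlt : ∑ g ∈ C, (X.filter (fun x => x - g ∉ X)).card
      < ∑ g ∈ C, (C.filter (fun u => u - g ∉ C)).card := by
    obtain ⟨g0, hg0C, hg0⟩ := Finset.exists_mem_ne (s := C) (by omega) (0:G)
    apply Finset.sum_lt_sum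
    · intro i hi
      by_cases hi0 : i = 0
      · subst hi0
        have hX0 : X.filter (fun x => x - 0 ∉ X) = ∅ := by
          apply Finset.filter_false_of_mem
          intro x hx
          simp only [sub_zero, not_not]
          exact hx
        rw [hX0]
        exact Nat.zero_le _
      · exact le_of_lt (hcon i hi hi0)
    · exact ⟨g0, hg0C, hcon g0 hg0C hg0⟩
  omega

lemma filter_shift_card (Y : Finset G) (g : G) :
    (Y.filter (fun v => v + g ∉ Y)).card = (Y.filter (fun v => v - g ∉ Y)).card := by
  have hpos : (Y.filter (fun v => v + g ∈ Y)).card = (Y.filter (fun v => v - g ∈ Y)).card := by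
    apply Finset.card_bij (fun v _ => v + g)
    · intro a ha
      rw [Finset.mem_filter] at ha ⊢
      refine ⟨ha.2, ?_⟩
      have : a + g - g = a := by abel
      rw [this]; exact ha.1
    · intro a _ b _ hab
      exact add_right_cancel hab
    · intro b hb
      rw [Finset.mem_filter] at hb
      refine ⟨b - g, Finset.mem_filter.mpr ⟨hb.2, ?_⟩, by abel⟩
      have : b - g + g = b := by abel
      rw [this]; exact hb.1
  have h1 : (Y.filter (fun v => v + g ∈ Y)).card + (Y.filter (fun v => v + g ∉ Y)).card
      = Y.card := by
    have := Finset.card_filter_add_card_filter_not (s := Y) (p := fun v => v + g ∈ Y)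
    simpa using this
  have h2 : (Y.filter (fun v => v - g ∈ Y)).card + (Y.filter (fun v => v - g ∉ Y)).card
      = Y.card := by
    have := Finset.card_filter_add_card_filter_not (s := Y) (p := fun v => v - g ∈ Y)
    simpa using this
  omega

theorem thmV : ∀ (m : ℕ) (C X : Finset G), C.card ≤ m → (0:G) ∈ C → C ⊆ X →
    (∀ x ∈ X, ∀ c ∈ C, x + c = 0 → c = 0) → X.card + C.card ≤ (C + X).card + 1 := by
  intro m
  induction m with
  | zero =>
    intro C X hm h0 _ _
    exact absurd (Finset.card_pos.mpr ⟨0, h0⟩) (by omega)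
  | succ m ih =>
    intro C X hm h0 hCX hanti
    by_cases h1 : C.card ≤ 1
    · have hC : C = {0} := by
        apply Finset.eq_singleton_iff_unique_mem.mpr
        exact ⟨h0, fun x hx => Finset.card_le_one.mp h1 x hx 0 h0⟩
      have hCX0 : C + X = X := by
        rw [hC, Finset.singleton_add]
        ext z
        simp
      rw [hCX0, hC, Finset.card_singleton]
    · have h2 : 2 ≤ C.card := by omega
      obtain ⟨g, hgC, hg0, hdelta⟩ := exists_good_g C X hCX h2 h0 hanti
      set C1 := C.filter (fun c => c + g ∈ C) with hC1def
      set X1 := X ∪ X.image (· + g) with hX1def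
      have hC1sub : C1 ⊆ C := Finset.filter_subset _ _
      have h0C1 : (0:G) ∈ C1 := Finset.mem_filter.mpr ⟨h0, by simpa using hgC⟩
      have hC1X1 : C1 ⊆ X1 :=
        subset_trans (subset_trans hC1sub hCX) Finset.subset_union_left
      have hanti1 : ∀ x ∈ X1, ∀ c ∈ C1, x + c = 0 → c = 0 := by
        intro x hx c hc hxc
        rcases Finset.mem_union.mp hx with hxX | hxI
        · exact hanti x hxX c (hC1sub hc) hxc
        · obtain ⟨x0, hx0, rfl⟩ := Finset.mem_image.mp hxI
          have hcg : c + g ∈ C := (Finset.mem_filter.mp hc).2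
          have hx0c : x0 + (c + g) = 0 := by rw [← hxc]; abel
          have hcg0 : c + g = 0 := hanti x0 hx0 (c + g) hcg hx0c
          have : g + c = 0 := by rw [add_comm]; exact hcg0
          exact hanti g (hCX hgC) c (hC1sub hc) this
      have hlt : C1.card < C.card := by
        by_contra hge
        have heqC : C1 = C := Finset.eq_of_subset_of_card_le hC1sub (by omega)
        have hstab : ∀ c ∈ C, c + g ∈ C := by
          intro c hc
          have : c ∈ C1 := heqC ▸ hc
          exact (Finset.mem_filter.mp this).2
        have horb : ∀ k : ℕ, k • g ∈ C := by
          intro k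
          induction k with
          | zero => simpa using h0
          | succ k ih2 => rw [succ_nsmul]; exact hstab _ ih2
        obtain ⟨k, hk, l, hl, hne, heq⟩ :=
          Finset.exists_ne_map_eq_of_card_lt_of_maps_to
            (s := Finset.range (C.card + 1)) (t := C) (by simp) (fun k _ => horb k)
        have hmex : ∃ m' : ℕ, 0 < m' ∧ m' • g = 0 := by
          rcases Nat.lt_or_ge k l with hkl | hkl
          · refine ⟨l - k, by omega, ?_⟩
            have hadd : (l - k) • g + k • g = l • g := by
              rw [← add_nsmul]
              congr 1
              omega
            rw [← heq] at hadd
            have := add_right_cancel (b := k • g) (a := (l-k) • g) (c := 0)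
            apply this
            rw [hadd, zero_add]
          · have hkl' : l < k := by
              rcases Nat.lt_or_ge l k with h | h
              · exact h
              · omega
            refine ⟨k - l, by omega, ?_⟩
            have hadd : (k - l) • g + l • g = k • g := by
              rw [← add_nsmul]
              congr 1
              omega
            rw [heq] at hadd
            apply add_right_cancel (b := l • g) (a := (k-l) • g) (c := 0)
            rw [hadd, zero_add]
        obtain ⟨m', hm'pos, hm'0⟩ := hmex
        have hsum : g + (m' - 1) • g = 0 := by
          have : g + (m' - 1) • g = m' • g := by
            rw [add_comm, ← succ_nsmul]
            congr 1
            omega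
          rw [this, hm'0]
        have hzero := hanti g (hCX hgC) ((m' - 1) • g) (horb _) hsum
        apply hg0
        rw [hzero] at hsum
        simpa using hsum
      have hX1card : X1.card = X.card + (X.filter (fun x => x + g ∉ X)).card := by
        have hdisj : Disjoint X ((X.image (· + g)) \ X) := Finset.disjoint_sdiff
        have hun : X ∪ (X.image (· + g)) \ X = X1 := Finset.union_sdiff_self_eq_union
        have himg : (X.image (· + g)) \ X = (X.filter (fun x => x + g ∉ X)).image (· + g) := by
          ext z
          simp only [Finset.mem_sdiff, Finset.mem_image, Finset.mem_filter]
          constructor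
          · rintro ⟨⟨x, hx, rfl⟩, hz⟩
            exact ⟨x, ⟨hx, hz⟩, rfl⟩
          · rintro ⟨x, ⟨hx, hxg⟩, rfl⟩
            exact ⟨⟨x, hx, rfl⟩, hxg⟩
        rw [← hun, Finset.card_union_of_disjoint hdisj, himg,
          Finset.card_image_of_injective _ (add_left_injective g)]
      have hC1card : C1.card + (C.filter (fun c => c + g ∉ C)).card = C.card := by
        have := Finset.card_filter_add_card_filter_not (s := C) (p := fun c => c + g ∈ C)
        simpa using this
      have hdelta' : (C.filter (fun c => c + g ∉ C)).card
          ≤ (X.filter (fun x => x + g ∉ X)).card := by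
        rw [filter_shift_card C g, filter_shift_card X g]
        exact hdelta
      have hsub : C1 + X1 ⊆ C + X := by
        intro z hz
        rw [Finset.mem_add] at hz ⊢
        obtain ⟨c, hc, x, hx, rfl⟩ := hz
        rcases Finset.mem_union.mp hx with hxX | hxI
        · exact ⟨c, hC1sub hc, x, hxX, rfl⟩
        · obtain ⟨x0, hx0, rfl⟩ := Finset.mem_image.mp hxI
          refine ⟨c + g, (Finset.mem_filter.mp hc).2, x0, hx0, by abel⟩
      have hih := ih C1 X1 (by omega) h0C1 hC1X1 hanti1
      have hcard := Finset.card_le_card hsub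
      omega

theorem ks_thm (A B : Finset G) (hA : (0:G) ∈ A) (hB : (0:G) ∈ B)
    (h : ∀ a ∈ A, ∀ b ∈ B, a + b = 0 → a = 0 ∧ b = 0) :
    A.card + B.card ≤ (A + B).card + 1 := by
  have h0 : (0:G) ∈ A ∩ B := Finset.mem_inter.mpr ⟨hA, hB⟩
  have hanti : ∀ x ∈ A ∪ B, ∀ c ∈ A ∩ B, x + c = 0 → c = 0 := by
    intro x hx c hc hxc
    rcases Finset.mem_union.mp hx with hxA | hxB
    · exact (h x hxA c (Finset.mem_inter.mp hc).2 hxc).2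
    · exact (h c (Finset.mem_inter.mp hc).1 x hxB (by rw [add_comm]; exact hxc)).1
  have hV := thmV (A ∩ B).card (A ∩ B) (A ∪ B) le_rfl h0 Finset.inter_subset_union hanti
  have hsub : (A ∩ B) + (A ∪ B) ⊆ A + B := by
    intro z hz
    rw [Finset.mem_add] at hz ⊢
    obtain ⟨c, hc, x, hx, rfl⟩ := hz
    rcases Finset.mem_union.mp hx with hxA | hxB
    · exact ⟨x, hxA, c, (Finset.mem_inter.mp hc).2, add_comm x c⟩
    · exact ⟨c, (Finset.mem_inter.mp hc).1, x, hxB, rfl⟩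
  have hcard := Finset.card_le_card hsub
  have hunion := Finset.card_union_add_card_inter A B
  omega

end KS

section LemmaH
variable {G : Type*} [AddCommGroup G] [DecidableEq G] [Fintype G]
variable {ι : Type*} [LinearOrder ι]

theorem lemmaH (y : ι → G) (U : Finset ι) (h : ℕ)
    (hfib : ∀ g : G, (U.filter (fun i => y i = g)).card ≤ h)
    (hzero : ∀ i ∈ U, y i ≠ 0)
    (hcard : Fintype.card G ≤ U.card) :
    ∃ C ⊆ U, C.Nonempty ∧ C.card ≤ h ∧ ∑ i ∈ C, y i = 0 := by
  by_contra hno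
  push_neg at hno
  have hn1 : 1 ≤ Fintype.card G := Fintype.card_pos
  set rk : ι → ℕ := fun i => (U.filter (fun j => y j = y i ∧ j ≤ i)).card with hrk
  have hrk_pos : ∀ i ∈ U, 1 ≤ rk i := by
    intro i hi
    have hmem : i ∈ U.filter (fun j => y j = y i ∧ j ≤ i) :=
      Finset.mem_filter.mpr ⟨hi, rfl, le_rfl⟩
    exact Finset.card_pos.mpr ⟨i, hmem⟩
  have hrk_le : ∀ i ∈ U, rk i ≤ h := by
    intro i hi
    refine le_trans (Finset.card_le_card ?_) (hfib (y i))
    intro j hj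
    rw [Finset.mem_filter] at hj ⊢
    exact ⟨hj.1, hj.2.1⟩
  have hh1 : 1 ≤ h := by
    obtain ⟨i, hi⟩ : U.Nonempty := Finset.card_pos.mp (by omega)
    exact le_trans (hrk_pos i hi) (hrk_le i hi)
  have hinj : ∀ i ∈ U, ∀ j ∈ U, rk i = rk j → y i = y j → i = j := by
    intro i hi j hj hr hy
    by_contra hne
    have key : ∀ a b : ι, a ∈ U → b ∈ U → a < b → y a = y b → rk a < rk b := by
      intro a b ha hb hab hyab
      apply Finset.card_lt_card
      constructor
      · intro c hc
        rw [Finset.mem_filter] at hc ⊢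
        exact ⟨hc.1, by rw [hc.2.1, hyab], le_trans hc.2.2 (le_of_lt hab)⟩
      · intro hcon
        have hbmem : b ∈ U.filter (fun j => y j = y b ∧ j ≤ b) :=
          Finset.mem_filter.mpr ⟨hb, rfl, le_rfl⟩
        have := hcon hbmem
        rw [Finset.mem_filter] at this
        exact absurd this.2.2 (not_le.mpr hab)
    rcases lt_or_gt_of_ne hne with hlt | hlt
    · exact absurd hr (Nat.ne_of_lt (key i j hi hj hlt hy))
    · exact absurd hr.symm (Nat.ne_of_lt (key j i hj hi hlt hy.symm))
  set Uc : ℕ → Finset ι := fun k => U.filter (fun i => rk i - 1 = k) with hUc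
  set Bc : ℕ → Finset G := fun k => insert (0:G) ((Uc k).image y) with hBc
  set P : ℕ → Finset G := fun k => ∑ j ∈ Finset.range k, Bc j with hP
  have hPsucc : ∀ k, P (k+1) = P k + Bc k := fun k => Finset.sum_range_succ _ _
  have hPzero : P 0 = {0} := by
    show (∑ j ∈ Finset.range 0, Bc j) = {0}
    rw [Finset.sum_range_zero]
    rfl
  have hUcU : ∀ k, Uc k ⊆ U := fun k => Finset.filter_subset _ _
  have hInv : ∀ k, (0:G) ∈ P k ∧ ∀ x ∈ P k, ∃ Cx, Cx ⊆ U ∧ (∀ i ∈ Cx, rk i - 1 < k) ∧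
      Cx.card ≤ k ∧ ∑ i ∈ Cx, y i = x := by
    intro k
    induction k with
    | zero =>
      rw [hPzero]
      constructor
      · exact Finset.mem_singleton_self 0
      · intro x hx
        rw [Finset.mem_singleton] at hx
        exact ⟨∅, Finset.empty_subset _, by simp, by simp, by simp [hx.symm]⟩
    | succ k ih =>
      rw [hPsucc k]
      constructor
      · have := Finset.add_mem_add ih.1 (Finset.mem_insert_self (0:G) ((Uc k).image y))
        simpa using this
      · intro x hx
        rw [Finset.mem_add] at hx
        obtain ⟨p, hp, b, hb, rfl⟩ := hx
        obtain ⟨Cp, hCpU, hCpk, hCpc, hCps⟩ := ih.2 p hp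
        rcases Finset.mem_insert.mp hb with rfl | hbI
        · exact ⟨Cp, hCpU, fun i hi => Nat.lt_succ_of_lt (hCpk i hi),
            Nat.le_succ_of_le hCpc, by rw [hCps, add_zero]⟩
        · obtain ⟨i, hiUc, rfl⟩ := Finset.mem_image.mp hbI
          have hiU : i ∈ U := hUcU k hiUc
          have hiK : rk i - 1 = k := (Finset.mem_filter.mp hiUc).2
          have hiNot : i ∉ Cp := fun hmem => absurd (hCpk i hmem) (by omega)
          refine ⟨insert i Cp, Finset.insert_subset hiU hCpU, ?_, ?_, ?_⟩
          · intro j hj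
            rcases Finset.mem_insert.mp hj with rfl | hjC
            · omega
            · exact Nat.lt_succ_of_lt (hCpk j hjC)
          · rw [Finset.card_insert_of_notMem hiNot]; omega
          · rw [Finset.sum_insert hiNot, hCps, add_comm]
  have hBcard : ∀ k, (Bc k).card = (Uc k).card + 1 := by
    intro k
    rw [hBc]
    rw [Finset.card_insert_of_notMem, Finset.card_image_of_injOn]
    · intro a ha b hb hyab
      have haU := hUcU k ha
      have hbU := hUcU k hb
      have hra : rk a - 1 = k := (Finset.mem_filter.mp ha).2
      have hrb : rk b - 1 = k := (Finset.mem_filter.mp hb).2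
      have h1 := hrk_pos a haU
      have h2 := hrk_pos b hbU
      exact hinj a haU b hbU (by omega) hyab
    · intro hmem
      obtain ⟨i, hi, hyi⟩ := Finset.mem_image.mp hmem
      exact hzero i (hUcU k hi) hyi
  have hgrow : ∀ k, k < h → (P k).card + (Bc k).card ≤ (P (k+1)).card + 1 := by
    intro k hk
    have hpair : ∀ a ∈ P k, ∀ b ∈ Bc k, a + b = 0 → a = 0 ∧ b = 0 := by
      intro a ha b hb hab
      rcases Finset.mem_insert.mp hb with rfl | hbI
      · rw [add_zero] at hab
        exact ⟨hab, rfl⟩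
      · exfalso
        obtain ⟨i, hiUc, rfl⟩ := Finset.mem_image.mp hbI
        obtain ⟨Ca, hCaU, hCak, hCac, hCas⟩ := (hInv k).2 a ha
        have hiU : i ∈ U := hUcU k hiUc
        have hiK : rk i - 1 = k := (Finset.mem_filter.mp hiUc).2
        have hiNot : i ∉ Ca := fun hmem => absurd (hCak i hmem) (by omega)
        apply hno (insert i Ca) (Finset.insert_subset hiU hCaU)
          ⟨i, Finset.mem_insert_self _ _⟩
          (by rw [Finset.card_insert_of_notMem hiNot]; omega)
        rw [Finset.sum_insert hiNot, hCas, add_comm]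
        exact hab
    have := ks_thm (P k) (Bc k) (hInv k).1 (Finset.mem_insert_self _ _) hpair
    rw [hPsucc k]
    exact this
  have hchain : ∀ k, k ≤ h → (∑ j ∈ Finset.range k, (Uc j).card) + 1 ≤ (P k).card := by
    intro k
    induction k with
    | zero => intro _; simp [hPzero]
    | succ k ih =>
      intro hk
      have h1 := hgrow k (by omega)
      have h2 := hBcard k
      have h3 := ih (by omega)
      rw [Finset.sum_range_succ]
      omega
  have hpart : ∑ j ∈ Finset.range h, (Uc j).card = U.card := by
    symm
    apply Finset.card_eq_sum_card_fiberwise (f := fun i => rk i - 1)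
    intro i hi
    rw [Finset.coe_range, Set.mem_Iio]
    have := hrk_pos i hi
    have := hrk_le i hi
    simp only; omega
  have hfin : (P h).card ≤ Fintype.card G := by
    calc (P h).card ≤ (Finset.univ : Finset G).card := Finset.card_le_univ _
    _ = Fintype.card G := Finset.card_univ
  have := hchain h le_rfl
  omega

end LemmaH

section Gao
variable {G : Type*} [AddCommGroup G] [DecidableEq G]

lemma prop_transfer {ι : Type*} [DecidableEq ι] {k : ℕ}
    (hk : ∀ y : Fin k → G, ∃ s : Finset (Fin k), s.Nonempty ∧ ∑ i ∈ s, y i = 0)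
    (y : ι → G) (R : Finset ι) (hR : k ≤ R.card) :
    ∃ C ⊆ R, C.Nonempty ∧ C.card ≤ k ∧ ∑ i ∈ C, y i = 0 := by
  obtain ⟨R', hR'sub, hR'card⟩ := Finset.exists_subset_card_eq hR
  set F : Fin k → ι := fun j => (R'.equivFin.symm (Fin.cast hR'card.symm j)).1 with hF
  have hFmem : ∀ j, F j ∈ R' := fun j => (R'.equivFin.symm _).2
  have hFinj : Function.Injective F := by
    intro a b hab
    have h1 : R'.equivFin.symm (Fin.cast hR'card.symm a)
        = R'.equivFin.symm (Fin.cast hR'card.symm b) := Subtype.ext hab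
    have h2 := R'.equivFin.symm.injective h1
    have h3 := congrArg Fin.val h2
    simp only [Fin.coe_cast] at h3
    exact Fin.ext h3
  obtain ⟨s, hsne, hssum⟩ := hk (fun j => y (F j))
  refine ⟨s.image F, ?_, hsne.image F, ?_, ?_⟩
  · intro x hx
    obtain ⟨j, _, rfl⟩ := Finset.mem_image.mp hx
    exact hR'sub (hFmem j)
  · calc (s.image F).card ≤ s.card := Finset.card_image_le
    _ ≤ k := by
        have := Finset.card_le_univ s
        simpa using this
  · rw [Finset.sum_image (fun a _ b _ hab => hFinj hab)]
    exact hssum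

lemma dav_reduce {ι : Type*} [DecidableEq ι] {k : ℕ} (hk1 : 1 ≤ k)
    (hk : ∀ y : Fin k → G, ∃ s : Finset (Fin k), s.Nonempty ∧ ∑ i ∈ s, y i = 0)
    (y : ι → G) :
    ∀ (m : ℕ) (R : Finset ι), R.card ≤ m →
      ∃ X ⊆ R, X.card < k ∧ ∑ i ∈ X, y i = ∑ i ∈ R, y i := by
  intro m
  induction m with
  | zero =>
    intro R hR
    exact ⟨R, Finset.Subset.rfl, by omega, rfl⟩
  | succ m ih =>
    intro R hR
    by_cases hc : R.card < k
    · exact ⟨R, Finset.Subset.rfl, hc, rfl⟩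
    · obtain ⟨C, hCR, hCne, _, hCs⟩ := prop_transfer hk y R (by omega)
      have hC1 : 1 ≤ C.card := Finset.card_pos.mpr hCne
      have hcard : (R \ C).card ≤ m := by
        have := Finset.card_sdiff_add_card_eq_card hCR
        omega
      obtain ⟨X, hX1, hX2, hX3⟩ := ih (R \ C) hcard
      refine ⟨X, subset_trans hX1 Finset.sdiff_subset, hX2, ?_⟩
      rw [hX3]
      have hsd := Finset.sum_sdiff (f := y) hCR
      rw [← hsd, hCs, add_zero]

lemma key_lemma {ι : Type*} [DecidableEq ι] (y : ι → G) (T : Finset ι)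
    (n D hb ρ β : ℕ)
    (hρ : ρ ≤ n + 1) (hβ : β ≤ hb + 1)
    (hext : ∀ R ⊆ T, ρ ≤ R.card → ∃ C ⊆ R, C.Nonempty ∧ C.card ≤ β ∧ ∑ i ∈ C, y i = 0)
    (hred : ∀ R : Finset ι, ∃ X ⊆ R, X.card < D ∧ ∑ i ∈ X, y i = ∑ i ∈ R, y i) :
    ∀ (m : ℕ) (R : Finset ι), R ⊆ T → R.card ≤ m →
      ∃ s ⊆ R, (∑ i ∈ s, y i = 0) ∧ s.card ≤ n ∧
        (n ≤ s.card + hb ∨ R.card < s.card + D) := by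
  intro m
  induction m with
  | zero =>
    intro R hRT hRm
    obtain ⟨X, hXR, hXD, hXs⟩ := hred R
    have h1 : R.card = 0 := by omega
    have h2 : X.card = 0 := by
      have := Finset.card_le_card hXR
      omega
    refine ⟨∅, Finset.empty_subset _, by simp, by simp, Or.inr ?_⟩
    simp only [Finset.card_empty]
    omega
  | succ m ih =>
    intro R hRT hRm
    by_cases hsmall : R.card < ρ
    · obtain ⟨X, hXR, hXD, hXs⟩ := hred R
      have hpart := Finset.card_sdiff_add_card_eq_card hXR
      refine ⟨R \ X, Finset.sdiff_subset, ?_, ?_, Or.inr ?_⟩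
      · have h0 : ∑ i ∈ R \ X, y i + ∑ i ∈ X, y i = ∑ i ∈ R, y i :=
          Finset.sum_sdiff hXR
        rw [hXs] at h0
        rwa [add_eq_right] at h0
      · omega
      · omega
    · obtain ⟨C, hCR, hCne, hCβ, hCs⟩ := hext R hRT (by omega)
      have hC1 : 1 ≤ C.card := Finset.card_pos.mpr hCne
      have hpart := Finset.card_sdiff_add_card_eq_card hCR
      have hcard : (R \ C).card ≤ m := by omega
      obtain ⟨s', hs'sub, hs's, hs'n, hs'alt⟩ :=
        ih (R \ C) (subset_trans Finset.sdiff_subset hRT) hcard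
      by_cases hwin : n ≤ s'.card + hb
      · exact ⟨s', subset_trans hs'sub Finset.sdiff_subset, hs's, hs'n, Or.inl hwin⟩
      · have hs'D : (R \ C).card < s'.card + D := by
          rcases hs'alt with h | h
          · exact absurd h hwin
          · exact h
        have hdisj : Disjoint s' C :=
          Finset.disjoint_of_subset_left hs'sub Finset.sdiff_disjoint
        refine ⟨s' ∪ C,
          Finset.union_subset (subset_trans hs'sub Finset.sdiff_subset) hCR, ?_, ?_, Or.inr ?_⟩
        · rw [Finset.sum_union hdisj, hs's, hCs, add_zero]
        · rw [Finset.card_union_of_disjoint hdisj]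
          omega
        · rw [Finset.card_union_of_disjoint hdisj]
          omega

lemma dav_le_card [Fintype G] (n D : ℕ) (hn : n = Fintype.card G)
    (hD : IsLeast {k : ℕ | ∀ y : Fin k → G, ∃ s : Finset (Fin k),
      s.Nonempty ∧ ∑ i ∈ s, y i = 0} D) : D ≤ n := by
  apply hD.2
  intro y0
  have hlt : Fintype.card G < Fintype.card (Fin (n+1)) := by
    simp [← hn]
  obtain ⟨a, b, hne, heq⟩ := Fintype.exists_ne_map_eq_of_card_lt
      (fun k : Fin (n+1) => ∑ i ∈ Finset.univ.filter (fun i : Fin n => (i:ℕ) < (k:ℕ)), y0 i) hlt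
  wlog hab : (a:ℕ) < (b:ℕ) generalizing a b
  · refine this b a hne.symm heq.symm ?_
    have : (a:ℕ) ≠ (b:ℕ) := fun h => hne (Fin.ext h)
    omega
  set s : Finset (Fin n) :=
    Finset.univ.filter (fun i : Fin n => (a:ℕ) ≤ (i:ℕ) ∧ (i:ℕ) < (b:ℕ)) with hs
  have hsplit : Finset.univ.filter (fun i : Fin n => (i:ℕ) < (b:ℕ))
      = Finset.univ.filter (fun i : Fin n => (i:ℕ) < (a:ℕ)) ∪ s := by
    ext i
    simp only [hs, Finset.mem_union, Finset.mem_filter, Finset.mem_univ, true_and]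
    omega
  have hdisj : Disjoint (Finset.univ.filter (fun i : Fin n => (i:ℕ) < (a:ℕ))) s := by
    rw [Finset.disjoint_left]
    intro i hi his
    rw [hs, Finset.mem_filter] at his
    rw [Finset.mem_filter] at hi
    omega
  refine ⟨s, ?_, ?_⟩
  · have hbn : (b:ℕ) ≤ n := by omega
    have han : (a:ℕ) < n := by omega
    exact ⟨⟨(a:ℕ), han⟩, by rw [hs, Finset.mem_filter]; exact ⟨Finset.mem_univ _, le_rfl, hab⟩⟩
  · rw [hsplit, Finset.sum_union hdisj] at heq
    exact left_eq_add.mp heq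

end Gao

section Gao2
variable {G : Type*} [AddCommGroup G] [DecidableEq G]

lemma main_upper' [Fintype G] (n D N : ℕ) (hn : n = Fintype.card G)
    (hD1 : 1 ≤ D) (hDn : D ≤ n) (hN : N + 1 = D + n)
    (hDprop : ∀ y : Fin D → G, ∃ s : Finset (Fin D), s.Nonempty ∧ ∑ i ∈ s, y i = 0)
    (y : Fin N → G) :
    ∃ s : Finset (Fin N), s.card = n ∧ ∑ i ∈ s, y i = 0 := by
  have hn1 : 1 ≤ n := by omega
  obtain ⟨g₀, -, hg₀⟩ := Finset.exists_max_image (Finset.univ : Finset G)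
      (fun g => (Finset.univ.filter (fun i : Fin N => y i = g)).card)
      ⟨0, Finset.mem_univ 0⟩
  set h := (Finset.univ.filter (fun i : Fin N => y i = g₀)).card with hh
  set y' : Fin N → G := fun i => y i - g₀ with hy'
  suffices hsuff : ∃ s : Finset (Fin N), s.card = n ∧ ∑ i ∈ s, y' i = 0 by
    obtain ⟨s, hsc, hss⟩ := hsuff
    refine ⟨s, hsc, ?_⟩
    have he : ∑ i ∈ s, y i = ∑ i ∈ s, (y' i + g₀) := by
      apply Finset.sum_congr rfl
      intro i _
      rw [hy']
      simp
    rw [he, Finset.sum_add_distrib, hss, zero_add, Finset.sum_const, hsc, hn]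
    exact card_nsmul_eq_zero
  have hfib' : ∀ g : G, (Finset.univ.filter (fun i : Fin N => y' i = g)).card ≤ h := by
    intro g
    have he : (Finset.univ.filter (fun i : Fin N => y' i = g))
        = (Finset.univ.filter (fun i : Fin N => y i = g + g₀)) := by
      ext i
      simp only [Finset.mem_filter, hy']
      constructor
      · rintro ⟨h1, h2⟩
        exact ⟨h1, by rw [← h2]; abel⟩
      · rintro ⟨h1, h2⟩
        exact ⟨h1, by rw [h2]; abel⟩
    rw [he]
    exact hg₀ _ (Finset.mem_univ _)
  have hZeq : (Finset.univ.filter (fun i : Fin N => y' i = 0))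
      = (Finset.univ.filter (fun i : Fin N => y i = g₀)) := by
    ext i
    simp only [Finset.mem_filter, hy', sub_eq_zero]
  by_cases hcase : n ≤ h
  · obtain ⟨s, hsub, hscard⟩ := Finset.exists_subset_card_eq (s :=
      (Finset.univ.filter (fun i : Fin N => y' i = 0))) (n := n) (by rw [hZeq]; exact hcase)
    refine ⟨s, hscard, Finset.sum_eq_zero ?_⟩
    intro i hi
    exact (Finset.mem_filter.mp (hsub hi)).2
  · set Z := Finset.univ.filter (fun i : Fin N => y' i = 0) with hZ
    set T := (Finset.univ : Finset (Fin N)) \ Z with hT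
    have hZcard : Z.card = h := by rw [hZeq]
    have hTcard : T.card + h = N := by
      have h1 := Finset.card_sdiff_add_card_eq_card (Finset.subset_univ Z)
      rw [hZcard] at h1
      rw [← hT] at h1
      simpa using h1
    have hTzero : ∀ i ∈ T, y' i ≠ 0 := by
      intro i hi
      rw [hT, Finset.mem_sdiff] at hi
      intro h0
      exact hi.2 (by rw [hZ]; exact Finset.mem_filter.mpr ⟨Finset.mem_univ _, h0⟩)
    have hfibT : ∀ (R : Finset (Fin N)), ∀ g : G,
        (R.filter (fun i => y' i = g)).card ≤ h := by
      intro R g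
      refine le_trans (Finset.card_le_card ?_) (hfib' g)
      intro i hi
      rw [Finset.mem_filter] at hi ⊢
      exact ⟨Finset.mem_univ _, hi.2⟩
    obtain ⟨ρ, β, hρ, hβ, hextf⟩ :
        ∃ ρ β : ℕ, ρ ≤ n + 1 ∧ β ≤ h + 1 ∧
          ∀ R ⊆ T, ρ ≤ R.card → ∃ C ⊆ R, C.Nonempty ∧ C.card ≤ β ∧ ∑ i ∈ C, y' i = 0 := by
      by_cases hDh : D ≤ h + 1
      · exact ⟨D, D, by omega, hDh, fun R _ hR => prop_transfer hDprop y' R hR⟩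
      · refine ⟨n, h, by omega, by omega, fun R hRT hR => ?_⟩
        exact lemmaH y' R h (fun g => hfibT R g)
          (fun i hi => hTzero i (hRT hi)) (by rw [← hn]; exact hR)
    obtain ⟨s', hs'T, hs'sum, hs'n, hs'alt⟩ :=
      key_lemma y' T n D h ρ β hρ hβ hextf
        (fun R => dav_reduce hD1 hDprop y' R.card R le_rfl) T.card T Finset.Subset.rfl le_rfl
    have hs'low : n ≤ s'.card + h := by
      rcases hs'alt with hh1 | hh1
      · exact hh1
      · omega
    obtain ⟨W, hWZ, hWcard⟩ := Finset.exists_subset_card_eq (s := Z) (n := n - s'.card) (by omega)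
    have hdisj : Disjoint s' W :=
      Finset.disjoint_of_subset_left hs'T
        (Finset.disjoint_of_subset_right hWZ Finset.sdiff_disjoint)
    refine ⟨s' ∪ W, ?_, ?_⟩
    · rw [Finset.card_union_of_disjoint hdisj, hWcard]
      omega
    · rw [Finset.sum_union hdisj, hs'sum, zero_add]
      apply Finset.sum_eq_zero
      intro i hi
      have hmem := hWZ hi
      rw [hZ, Finset.mem_filter] at hmem
      exact hmem.2

lemma main_lower [Fintype G] (n D E : ℕ) (hn : n = Fintype.card G)
    (hD1 : 1 ≤ D) (hDn : D ≤ n)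
    (hD : IsLeast {k : ℕ | ∀ y : Fin k → G, ∃ s : Finset (Fin k),
      s.Nonempty ∧ ∑ i ∈ s, y i = 0} D)
    (hE : IsLeast {k : ℕ | ∀ y : Fin k → G, ∃ s : Finset (Fin k),
      s.card = n ∧ ∑ i ∈ s, y i = 0} E) :
    D + n - 1 ≤ E := by
  have hn1 : 1 ≤ n := by omega
  have hnE : n ≤ E := by
    by_contra hcon
    obtain ⟨s, hscard, -⟩ := hE.1 (fun _ => (0:G))
    have hle := Finset.card_le_univ s
    rw [hscard] at hle
    simp only [Finset.card_univ, Fintype.card_fin] at hle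
    omega
  by_contra hcon
  have hEb : E + 2 ≤ D + n := by omega
  have hw : ∃ w : Fin (D-1) → G, ∀ s : Finset (Fin (D-1)), s.Nonempty → ∑ i ∈ s, w i ≠ 0 := by
    by_contra hcon2
    push_neg at hcon2
    have hle := hD.2 hcon2
    omega
  obtain ⟨w, hwprop⟩ := hw
  set y : Fin E → G := fun i => if hc : (i:ℕ) < D - 1 then w ⟨(i:ℕ), hc⟩ else 0 with hy
  obtain ⟨s, hscard, hssum⟩ := hE.1 y
  have hD2 : 2 ≤ D := by omega
  set s₁ := s.filter (fun i : Fin E => (i:ℕ) < D - 1) with hs1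
  have hs1sub : s₁ ⊆ s := Finset.filter_subset _ _
  have hsum1 : ∑ i ∈ s₁, y i = 0 := by
    have hsplit := Finset.sum_sdiff (f := y) hs1sub
    have hzero2 : ∑ i ∈ s \ s₁, y i = 0 := by
      apply Finset.sum_eq_zero
      intro i hi
      rw [Finset.mem_sdiff] at hi
      have hni : ¬ (i:ℕ) < D - 1 := by
        intro hlt
        exact hi.2 (Finset.mem_filter.mpr ⟨hi.1, hlt⟩)
      simp only [hy]
      rw [dif_neg hni]
    rw [hzero2, zero_add] at hsplit
    rw [hsplit, hssum]
  set U₁ := Finset.univ.filter (fun i : Fin E => (i:ℕ) < D - 1) with hU1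
  have himg : U₁.image (fun i : Fin E => (i:ℕ)) = Finset.range (D-1) := by
    ext b
    simp only [hU1, Finset.mem_image, Finset.mem_filter, Finset.mem_range,
      Finset.mem_univ, true_and]
    constructor
    · rintro ⟨a, ha, rfl⟩
      exact ha
    · intro hb
      exact ⟨⟨b, by omega⟩, hb, rfl⟩
  have hcard1 : U₁.card = D - 1 := by
    have hc := Finset.card_image_of_injOn (s := U₁) (f := fun i : Fin E => (i:ℕ))
        (fun a _ b _ hab => Fin.ext hab)
    rw [himg, Finset.card_range] at hc
    omega
  have hsub2 : s \ s₁ ⊆ Finset.univ \ U₁ := by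
    intro i hi
    rw [Finset.mem_sdiff] at hi ⊢
    refine ⟨Finset.mem_univ _, fun hmem => ?_⟩
    rw [hU1, Finset.mem_filter] at hmem
    exact hi.2 (Finset.mem_filter.mpr ⟨hi.1, hmem.2⟩)
  have h2 := Finset.card_le_card hsub2
  have h5 := Finset.card_sdiff_add_card_eq_card (Finset.subset_univ U₁)
  have h6 := Finset.card_sdiff_add_card_eq_card hs1sub
  have huniv : (Finset.univ : Finset (Fin E)).card = E := by
    simp
  have hs1card : 1 ≤ s₁.card := by omega
  set f : Fin E → Fin (D-1) := fun i => ⟨min (i:ℕ) (D-2), by omega⟩ with hf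
  have hinjf : ∀ a ∈ s₁, ∀ b ∈ s₁, f a = f b → a = b := by
    intro a ha b hb hab
    have ha' := (Finset.mem_filter.mp ha).2
    have hb' := (Finset.mem_filter.mp hb).2
    have hv := congrArg Fin.val hab
    simp only [hf] at hv
    rw [Nat.min_eq_left (by omega), Nat.min_eq_left (by omega)] at hv
    exact Fin.ext hv
  have hwy : ∀ i ∈ s₁, w (f i) = y i := by
    intro i hi
    have hi' := (Finset.mem_filter.mp hi).2
    simp only [hy, hf]
    rw [dif_pos hi']
    congr 1
    exact Fin.ext (Nat.min_eq_left (by omega))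
  have htne : (s₁.image f).Nonempty :=
    (Finset.card_pos.mp hs1card).image f
  have htsum : ∑ j ∈ s₁.image f, w j = 0 := by
    rw [Finset.sum_image hinjf, Finset.sum_congr rfl hwy]
    exact hsum1
  exact hwprop (s₁.image f) htne htsum

end Gao2

/-- Gao's theorem: `E(G) = D(G) + n - 1` for a finite abelian group of order `n`. -/
theorem gao_theorem {G : Type*} [AddCommGroup G] [Fintype G]
    (n : ℕ) (hn : n = Fintype.card G) (D E : ℕ)
    (hD : IsLeast {k : ℕ | ∀ y : Fin k → G, ∃ s : Finset (Fin k),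
      s.Nonempty ∧ ∑ i ∈ s, y i = 0} D)
    (hE : IsLeast {k : ℕ | ∀ y : Fin k → G, ∃ s : Finset (Fin k),
      s.card = n ∧ ∑ i ∈ s, y i = 0} E) :
    E = D + n - 1 := by
  classical
  have hn1 : 1 ≤ n := by
    rw [hn]
    exact Fintype.card_pos
  have hD1 : 1 ≤ D := by
    rcases Nat.eq_zero_or_pos D with h0 | h1
    · exfalso
      have hmem := hD.1
      subst h0
      obtain ⟨s, hs, -⟩ := hmem (fun _ => (0:G))
      obtain ⟨i, -⟩ := hs
      exact absurd i.2 (Nat.not_lt_zero _)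
    · exact h1
  have hDn : D ≤ n := dav_le_card n D hn hD
  have hupper : E ≤ D + n - 1 := by
    apply hE.2
    intro y
    exact main_upper' n D (D + n - 1) hn hD1 hDn (by omega) hD.1 y
  have hlower : D + n - 1 ≤ E := main_lower n D E hn hD1 hDn hD hE
  omega
end
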